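/- Let a ∈ (0,1) and f : 𝔹ⁿ → 𝔹ⁿ be the radial map f(z) = z |z|^{a−1} (with f(0)=0). Fix θ ∈ (0, π/2]. For x, y ∈ 𝔹ⁿ with |x| = |y| and ∠(x,0,y) = 2θ, the ratio v_{𝔹ⁿ}(f(x),f(y)) / v_{𝔹ⁿ}(x,y) tends to ∞ as x → 0. Hence f is not a bilipschitz map with respect to the visual angle metric. -/

import Mathlib

open Real Set Metric Filter Topology

/-- The visual angle metric. -/
noncomputable def visualAngle {n : ℕ} (G : Set (EuclideanSpace ℝ (Fin n)))
    (x y : EuclideanSpace ℝ (Fin n)) : ℝ :=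
  sSup ((fun z => EuclideanGeometry.angle x z y) '' frontier G)

section Aux

open RealInnerProductSpace

/-- If `cos A ≤ 1 - t²/2` with `A ≥ 0` and `t ∈ [0,1]`, then `t ≤ A`. -/
lemma VA.angle_ge_of_cos_le {A t : ℝ} (hA0 : 0 ≤ A) (ht0 : 0 ≤ t) (ht1 : t ≤ 1)
    (h : Real.cos A ≤ 1 - t^2/2) : t ≤ A := by
  by_contra hlt
  push_neg at hlt
  have h1 : Real.cos t < Real.cos A :=
    Real.cos_lt_cos_of_nonneg_of_le_pi hA0 (by linarith [Real.pi_gt_three]) hlt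
  have h2 : 1 - t^2/2 ≤ Real.cos t := Real.one_sub_sq_div_two_le_cos
  linarith

/-- If `1 - (9/4) d² ≤ cos A` with `A ∈ [0,π]`, `d ≥ 0`, then `A ≤ 5 d`. -/
lemma VA.angle_le_of_cos_ge {A d : ℝ} (hA0 : 0 ≤ A) (hAπ : A ≤ π) (hd : 0 ≤ d)
    (h : 1 - (9/4) * d^2 ≤ Real.cos A) : A ≤ 5 * d := by
  by_contra hlt
  push_neg at hlt
  have h5d : |5*d| ≤ π := by
    rw [abs_of_nonneg (by positivity)]; linarith
  have hJ : Real.cos (5*d) ≤ 1 - 2/π^2 * (5*d)^2 := Real.cos_le_one_sub_mul_cos_sq h5d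
  have hmono : Real.cos A < Real.cos (5*d) :=
    Real.cos_lt_cos_of_nonneg_of_le_pi (by positivity) hAπ hlt
  have hπ : π < 3.15 := Real.pi_lt_d2
  have hπ0 : (0:ℝ) < π := Real.pi_pos
  have hπ2 : π^2 < 10 := by nlinarith
  have hh : 2/10 * (5*d)^2 ≤ 2/π^2 * (5*d)^2 := by gcongr
  nlinarith [sq_nonneg d]

lemma VA.real_cos_key {P Q D S I : ℝ} (hP : 2/3 ≤ P) (hQ : 2/3 ≤ Q) (hD : D ≤ 2/3)
    (hI : -(P*D) ≤ I) (hS : S = P^2 + I) (hq2 : Q^2 = P^2 + 2*I + D^2) (hSle : S ≤ P*Q) :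
    1 - (9/4) * D^2 ≤ S / (P*Q) := by
  have hPQpos : (0:ℝ) < P * Q := by nlinarith
  have hS0 : 0 ≤ S := by nlinarith
  have e1 : (P*Q - S) * (P*Q + S) ≤ P^2 * D^2 := by nlinarith [sq_nonneg I]
  have e2 : (P*Q - S) * (P*Q) ≤ (P*Q - S) * (P*Q + S) :=
    mul_le_mul_of_nonneg_left (by linarith) (by linarith)
  have hQ2 : (4:ℝ)/9 ≤ Q^2 := by nlinarith
  have e3 : P^2 * D^2 ≤ ((9/4) * D^2 * (P*Q)) * (P*Q) := by
    nlinarith [mul_nonneg (sq_nonneg P) (mul_nonneg (mul_self_nonneg D) (sub_nonneg.2 hQ2))]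
  have hkey : P*Q - S ≤ (9/4) * D^2 * (P*Q) :=
    (mul_le_mul_iff_of_pos_right hPQpos).1 (e2.trans (e1.trans e3))
  rw [le_div_iff₀ hPQpos]; nlinarith

variable {n : ℕ}

lemma VA.euclid_angle_eq (x y z : EuclideanSpace ℝ (Fin n)) :
    EuclideanGeometry.angle x z y = InnerProductGeometry.angle (x - z) (y - z) := by
  simp [EuclideanGeometry.angle, vsub_eq_sub]

/-- The angle subtended at a point of the unit sphere by two points of norm `≤ 1/3` is at
most `5` times their distance. -/
lemma VA.angle_le_five_mul (x y z : EuclideanSpace ℝ (Fin n)) (hz : ‖z‖ = 1)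
    (hx : ‖x‖ ≤ 1/3) (hy : ‖y‖ ≤ 1/3) :
    EuclideanGeometry.angle x z y ≤ 5 * ‖x - y‖ := by
  set p := x - z with hp
  set q := y - z with hqdef
  have hq : q = p + (y - x) := by rw [hp, hqdef]; abel
  set d : EuclideanSpace ℝ (Fin n) := y - x with hd
  have hP : (2:ℝ)/3 ≤ ‖p‖ := by
    have := norm_sub_norm_le z x
    have h2 : ‖z - x‖ = ‖p‖ := by rw [hp, norm_sub_rev]
    linarith
  have hQ : (2:ℝ)/3 ≤ ‖q‖ := by
    have := norm_sub_norm_le z y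
    have h2 : ‖z - y‖ = ‖q‖ := by rw [hqdef, norm_sub_rev]
    linarith
  have hD : ‖d‖ ≤ 2/3 := by
    calc ‖d‖ ≤ ‖y‖ + ‖x‖ := norm_sub_le y x
    _ ≤ 2/3 := by linarith
  have h1 : ⟪p, q⟫ = ‖p‖^2 + ⟪p, d⟫ := by
    rw [hq, inner_add_right, real_inner_self_eq_norm_sq]
  have h2 : ‖q‖^2 = ‖p‖^2 + 2*⟪p, d⟫ + ‖d‖^2 := by
    rw [hq]; rw [norm_add_sq_real]
  have h3' := abs_le.1 (abs_real_inner_le_norm p d)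
  have hip : ⟪p, q⟫ ≤ ‖p‖ * ‖q‖ := real_inner_le_norm p q
  have hcosge : 1 - (9/4) * ‖d‖^2 ≤ ⟪p, q⟫ / (‖p‖ * ‖q‖) :=
    VA.real_cos_key hP hQ hD h3'.1 h1 h2 hip
  have hcos : Real.cos (EuclideanGeometry.angle x z y) = ⟪p, q⟫ / (‖p‖ * ‖q‖) := by
    rw [VA.euclid_angle_eq]; exact InnerProductGeometry.cos_angle _ _
  rw [← hcos] at hcosge
  have := VA.angle_le_of_cos_ge (EuclideanGeometry.angle_nonneg x z y)
    (EuclideanGeometry.angle_le_pi x z y) (norm_nonneg d) hcosge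
  have hxy : ‖x - y‖ = ‖d‖ := by rw [hd, norm_sub_rev]
  rw [hxy]; exact this

lemma VA.cos_angle_le {u w e : EuclideanSpace ℝ (Fin n)} (hu : ‖u‖ = 1) (hw : ‖w‖ = 1)
    (he : ‖e‖ = 1) {γ c s : ℝ} (hue : ⟪u, e⟫ = γ) (hwe : ⟪w, e⟫ = γ)
    (huw : ⟪u, w⟫ = c) (hγ0 : 0 ≤ γ) (hγ1 : γ ≤ 1) (hc1 : c ≤ 1)
    (hs0 : 0 < s) (hs1 : s ≤ 1) :
    Real.cos (EuclideanGeometry.angle (s•u) (-e) (s•w)) ≤ 1 - s^2*(1-c)/4 := by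
  have heu : ⟪e, u⟫ = γ := by rw [real_inner_comm]; exact hue
  have hew : ⟪e, w⟫ = γ := by rw [real_inner_comm]; exact hwe
  have hsu2 : ‖s•u‖^2 = s^2 := by rw [norm_smul, hu, mul_one, Real.norm_eq_abs, sq_abs]
  have hsw2 : ‖s•w‖^2 = s^2 := by rw [norm_smul, hw, mul_one, Real.norm_eq_abs, sq_abs]
  have hp : s•u - (-e) = s•u + e := by abel
  have hq : s•w - (-e) = s•w + e := by abel
  have hS : ⟪s•u + e, s•w + e⟫ = s^2*c + 2*s*γ + 1 := by
    simp only [inner_add_left, inner_add_right, real_inner_smul_left, real_inner_smul_right,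
      huw, hue, hwe, heu, hew, real_inner_self_eq_norm_sq, he]
    ring
  set N : ℝ := s^2 + 2*s*γ + 1 with hN
  have hNpos : 0 < N := by nlinarith [mul_nonneg hs0.le hγ0]
  have hP2 : ‖s•u + e‖^2 = N := by
    rw [← real_inner_self_eq_norm_sq]
    simp only [inner_add_left, inner_add_right, real_inner_smul_left, real_inner_smul_right,
      hue, heu, real_inner_self_eq_norm_sq, he, hsu2]
    ring
  have hQ2 : ‖s•w + e‖^2 = N := by
    rw [← real_inner_self_eq_norm_sq]
    simp only [inner_add_left, inner_add_right, real_inner_smul_left, real_inner_smul_right,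
      hwe, hew, real_inner_self_eq_norm_sq, he, hsw2]
    ring
  have hPn : ‖s•u + e‖ = Real.sqrt N := by
    rw [← hP2]; exact (Real.sqrt_sq (norm_nonneg _)).symm
  have hQn : ‖s•w + e‖ = Real.sqrt N := by
    rw [← hQ2]; exact (Real.sqrt_sq (norm_nonneg _)).symm
  have hcos : Real.cos (EuclideanGeometry.angle (s•u) (-e) (s•w))
      = (s^2*c + 2*s*γ + 1) / N := by
    rw [VA.euclid_angle_eq, hp, hq, InnerProductGeometry.cos_angle, hS, hPn, hQn,
      Real.mul_self_sqrt hNpos.le]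
  rw [hcos, hN, div_le_iff₀ (hN ▸ hNpos)]
  have hsγ : s*γ ≤ 1 := mul_le_one₀ hs1 hγ0 hγ1
  nlinarith [mul_nonneg (mul_nonneg (sq_nonneg s) (sub_nonneg.2 hc1))
    (by nlinarith : (0:ℝ) ≤ 4 - (s^2 + 2*s*γ + 1))]

lemma VA.exists_unit_orthogonal (hn : 2 ≤ n) (u : EuclideanSpace ℝ (Fin n)) (hu : u ≠ 0) :
    ∃ e : EuclideanSpace ℝ (Fin n), ‖e‖ = 1 ∧ ⟪u, e⟫ = 0 := by
  set K : Submodule ℝ (EuclideanSpace ℝ (Fin n)) := ℝ ∙ u with hK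
  have hdim : Module.finrank ℝ K + Module.finrank ℝ Kᗮ = n := by
    rw [Submodule.finrank_add_finrank_orthogonal]
    simp [finrank_euclideanSpace_fin]
  have hK1 : Module.finrank ℝ K = 1 := finrank_span_singleton hu
  have hpos : 0 < Module.finrank ℝ Kᗮ := by omega
  obtain ⟨v, hvK, hv0⟩ : ∃ v ∈ Kᗮ, v ≠ 0 := by
    by_contra h
    push_neg at h
    have : Kᗮ = ⊥ := by
      rw [Submodule.eq_bot_iff]; exact h
    rw [this, finrank_bot] at hpos; omega
  refine ⟨‖v‖⁻¹ • v, ?_, ?_⟩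
  · rw [norm_smul, norm_inv, norm_norm, inv_mul_cancel₀ (norm_ne_zero_iff.2 hv0)]
  · rw [inner_smul_right]
    have : ⟪u, v⟫ = 0 := by
      have := (Submodule.mem_orthogonal K v).1 hvK u (Submodule.mem_span_singleton_self u)
      simpa [real_inner_comm] using this
    simp [this]

/-- There is a point on the unit sphere at which `s•u` and `s•w` subtend an angle at least
`s sin θ`. -/
lemma VA.exists_big_angle (hn : 2 ≤ n) {u w : EuclideanSpace ℝ (Fin n)} (hu : ‖u‖ = 1)
    (hw : ‖w‖ = 1) {θ : ℝ} (hθ : θ ∈ Ioc 0 (π/2))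
    (huw : EuclideanGeometry.angle u 0 w = 2*θ) {s : ℝ} (hs0 : 0 < s) (hs1 : s ≤ 1) :
    ∃ z : EuclideanSpace ℝ (Fin n), ‖z‖ = 1 ∧
      s * Real.sin θ ≤ EuclideanGeometry.angle (s•u) z (s•w) := by
  have hπ := Real.pi_pos
  have hsin : 0 < Real.sin θ := Real.sin_pos_of_pos_of_lt_pi hθ.1 (by linarith [hθ.2])
  have hc : ⟪u, w⟫ = Real.cos (2*θ) := by
    have h1 : InnerProductGeometry.angle u w = 2*θ := by
      rw [← huw, VA.euclid_angle_eq]; simp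
    have h2 := InnerProductGeometry.cos_angle u w
    rw [h1, hu, hw] at h2; simpa using h2.symm
  have hsc := Real.sin_sq_add_cos_sq θ
  have hc' : ⟪w, u⟫ = Real.cos (2*θ) := by rw [real_inner_comm]; exact hc
  have h2c : Real.cos (2*θ) = 2*Real.cos θ^2 - 1 := Real.cos_two_mul θ
  obtain ⟨e, he1, hγu, hγw, hγ0, hγ1⟩ :
      ∃ e : EuclideanSpace ℝ (Fin n), ‖e‖ = 1 ∧ ⟪u, e⟫ = Real.cos θ ∧ ⟪w, e⟫ = Real.cos θ
        ∧ 0 ≤ Real.cos θ ∧ Real.cos θ ≤ 1 := by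
    rcases lt_or_eq_of_le hθ.2 with hlt | heq
    · have hcosθ : 0 < Real.cos θ := Real.cos_pos_of_mem_Ioo ⟨by linarith [hθ.1], hlt⟩
      have hk2 : ‖u + w‖^2 = (2*Real.cos θ)^2 := by
        rw [norm_add_sq_real, hu, hw, hc]; nlinarith
      have hk : ‖u + w‖ = 2*Real.cos θ := by
        rw [← Real.sqrt_sq (norm_nonneg (u+w)), hk2, Real.sqrt_sq (by positivity)]
      have hkpos : (0:ℝ) < ‖u + w‖ := by rw [hk]; positivity
      refine ⟨‖u + w‖⁻¹ • (u + w), ?_, ?_, ?_, hcosθ.le, Real.cos_le_one θ⟩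
      · rw [norm_smul, norm_inv, norm_norm, inv_mul_cancel₀ hkpos.ne']
      · rw [real_inner_smul_right, inner_add_right, real_inner_self_eq_norm_sq, hu, hc, hk]
        field_simp
        nlinarith
      · rw [real_inner_smul_right, inner_add_right, real_inner_self_eq_norm_sq, hw, hk]
        rw [hc']
        field_simp
        nlinarith
    · have hcπ : Real.cos (2*θ) = -1 := by
        rw [heq, show 2*(π/2) = π by ring, Real.cos_pi]
      have hweq : w = -u := by
        have h0 : ‖u + w‖^2 = 0 := by rw [norm_add_sq_real, hu, hw, hc, hcπ]; ring
        have : u + w = 0 := by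
          have := (norm_eq_zero.1 (pow_eq_zero_iff (n := 2) (by norm_num) |>.1 h0))
          exact this
        linear_combination (norm := module) this
      obtain ⟨e, he1, he0⟩ := VA.exists_unit_orthogonal hn u (by
        intro h0; rw [h0] at hu; simp at hu)
      have hcos0 : Real.cos θ = 0 := by rw [heq, Real.cos_pi_div_two]
      refine ⟨e, he1, by rw [he0, hcos0], ?_, by rw [hcos0], by rw [hcos0]; norm_num⟩
      rw [hweq, inner_neg_left, he0, hcos0, neg_zero]
  refine ⟨-e, by rw [norm_neg, he1], ?_⟩
  have hbound := VA.cos_angle_le hu hw he1 hγu hγw hc hγ0 hγ1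
    (Real.cos_le_one _) hs0 hs1
  apply VA.angle_ge_of_cos_le (EuclideanGeometry.angle_nonneg _ _ _)
    (mul_nonneg hs0.le hsin.le)
    (mul_le_one₀ hs1 hsin.le (Real.sin_le_one θ))
  calc Real.cos (EuclideanGeometry.angle (s•u) (-e) (s•w))
      ≤ 1 - s^2*(1 - Real.cos (2*θ))/4 := hbound
    _ ≤ 1 - (s*Real.sin θ)^2/2 := by nlinarith

lemma VA.nontrivial_of_two_le (hn : 2 ≤ n) : Nontrivial (EuclideanSpace ℝ (Fin n)) := by
  have : 0 < Module.finrank ℝ (EuclideanSpace ℝ (Fin n)) := by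
    rw [finrank_euclideanSpace_fin]; omega
  exact Module.nontrivial_of_finrank_pos this

lemma VA.va_bddAbove {G : Set (EuclideanSpace ℝ (Fin n))} (x y : EuclideanSpace ℝ (Fin n)) :
    BddAbove ((fun z => EuclideanGeometry.angle x z y) '' frontier G) := by
  refine ⟨π, ?_⟩
  rintro _ ⟨z, _, rfl⟩
  exact EuclideanGeometry.angle_le_pi x z y

lemma VA.va_ge (x y z : EuclideanSpace ℝ (Fin n)) (hz : ‖z‖ = 1) :
    EuclideanGeometry.angle x z y ≤ visualAngle (ball (0:EuclideanSpace ℝ (Fin n)) 1) x y := by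
  rw [visualAngle]
  apply le_csSup (VA.va_bddAbove x y)
  refine ⟨z, ?_, rfl⟩
  rw [frontier_ball (0:EuclideanSpace ℝ (Fin n)) one_ne_zero]
  simpa [mem_sphere_iff_norm] using hz

lemma VA.va_le (hn : 2 ≤ n) (x y : EuclideanSpace ℝ (Fin n))
    (hx : ‖x‖ ≤ 1/3) (hy : ‖y‖ ≤ 1/3) :
    visualAngle (ball (0:EuclideanSpace ℝ (Fin n)) 1) x y ≤ 5 * ‖x - y‖ := by
  haveI := VA.nontrivial_of_two_le hn
  rw [visualAngle, frontier_ball (0:EuclideanSpace ℝ (Fin n)) one_ne_zero]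
  apply csSup_le
  · exact (NormedSpace.sphere_nonempty.mpr zero_le_one).image _
  · rintro _ ⟨z, hz, rfl⟩
    rw [mem_sphere_iff_norm, sub_zero] at hz
    exact VA.angle_le_five_mul x y z hz hx hy

end Aux

/-- For `a ∈ (0,1)`, the radial map `f(z) = |z|^{a−1} z` of the unit ball: along points
`r•u, r•w` with `‖u‖ = ‖w‖ = 1` and angle `2θ` at the origin, the ratio
`v(f x, f y)/v(x,y)` tends to `∞` as `r → 0⁺`; hence `f` is not bilipschitz w.r.t. the
visual angle metric. -/
theorem radial_map_not_visualAngle_bilipschitz {n : ℕ} (hn : 2 ≤ n)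
    (a : ℝ) (ha : a ∈ Ioo (0:ℝ) 1)
    (f : EuclideanSpace ℝ (Fin n) → EuclideanSpace ℝ (Fin n))
    (hf : ∀ z, f z = (‖z‖ ^ (a - 1) : ℝ) • z)
    (θ : ℝ) (hθ : θ ∈ Ioc 0 (π / 2))
    (u w : EuclideanSpace ℝ (Fin n)) (hu : ‖u‖ = 1) (hw : ‖w‖ = 1)
    (huw : EuclideanGeometry.angle u 0 w = 2 * θ) :
    Tendsto (fun r : ℝ =>
        visualAngle (ball (0 : EuclideanSpace ℝ (Fin n)) 1) (f (r • u)) (f (r • w)) /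
        visualAngle (ball (0 : EuclideanSpace ℝ (Fin n)) 1) (r • u) (r • w))
      (𝓝[>] 0) atTop ∧
    ¬ ∃ L : ℝ, 1 ≤ L ∧
      ∀ x ∈ ball (0 : EuclideanSpace ℝ (Fin n)) 1,
      ∀ y ∈ ball (0 : EuclideanSpace ℝ (Fin n)) 1,
        visualAngle (ball (0 : EuclideanSpace ℝ (Fin n)) 1) x y / L ≤
          visualAngle (ball (0 : EuclideanSpace ℝ (Fin n)) 1) (f x) (f y) ∧
        visualAngle (ball (0 : EuclideanSpace ℝ (Fin n)) 1) (f x) (f y) ≤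
          L * visualAngle (ball (0 : EuclideanSpace ℝ (Fin n)) 1) x y := by
  have hπ := Real.pi_pos
  have hsin : 0 < Real.sin θ := Real.sin_pos_of_pos_of_lt_pi hθ.1 (by linarith [hθ.2])
  set B : Set (EuclideanSpace ℝ (Fin n)) := ball (0 : EuclideanSpace ℝ (Fin n)) 1 with hB
  -- key bounds on the visual angle of the scaled pair
  have key : ∀ s : ℝ, 0 < s → s ≤ 1/3 →
      s * Real.sin θ ≤ visualAngle B (s•u) (s•w) ∧ visualAngle B (s•u) (s•w) ≤ 10*s := by
    intro s hs0 hs13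
    have hnu : ‖s•u‖ = s := by
      rw [norm_smul, hu, mul_one, Real.norm_eq_abs, abs_of_pos hs0]
    have hnw : ‖s•w‖ = s := by
      rw [norm_smul, hw, mul_one, Real.norm_eq_abs, abs_of_pos hs0]
    constructor
    · obtain ⟨z, hz1, hzang⟩ := VA.exists_big_angle hn hu hw hθ huw hs0 (by linarith)
      exact hzang.trans (VA.va_ge _ _ z hz1)
    · have hdiff : ‖s•u - s•w‖ ≤ 2*s := by
        rw [← smul_sub, norm_smul, Real.norm_eq_abs, abs_of_pos hs0]
        have : ‖u - w‖ ≤ 2 := by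
          calc ‖u - w‖ ≤ ‖u‖ + ‖w‖ := norm_sub_le u w
          _ = 2 := by rw [hu, hw]; norm_num
        nlinarith
      calc visualAngle B (s•u) (s•w) ≤ 5 * ‖s•u - s•w‖ :=
            VA.va_le hn _ _ (by rw [hnu]; exact hs13) (by rw [hnw]; exact hs13)
        _ ≤ 10*s := by linarith
  -- the radial map on these points
  have hfr : ∀ r : ℝ, 0 < r → f (r•u) = (r^a : ℝ)•u ∧ f (r•w) = (r^a : ℝ)•w := by
    intro r hr
    have hmul : r ^ (a-1) * r = r ^ a := by
      calc r^(a-1)*r = r^(a-1)*r^(1:ℝ) := by rw [Real.rpow_one]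
      _ = r^(a-1+1) := (Real.rpow_add hr _ _).symm
      _ = r^a := by ring_nf
    constructor
    · rw [hf, norm_smul, hu, mul_one, Real.norm_eq_abs, abs_of_pos hr, smul_smul, hmul]
    · rw [hf, norm_smul, hw, mul_one, Real.norm_eq_abs, abs_of_pos hr, smul_smul, hmul]
  set ρ : ℝ := min (1/3 : ℝ) ((1/3 : ℝ) ^ (a⁻¹ : ℝ)) with hρ
  have hρpos : 0 < ρ := lt_min (by norm_num) (Real.rpow_pos_of_pos (by norm_num) _)
  -- eventual lower bound for the ratio
  have hev : ∀ᶠ r in 𝓝[>] (0:ℝ), Real.sin θ/10 * r^(a-1) ≤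
      visualAngle B (f (r • u)) (f (r • w)) / visualAngle B (r • u) (r • w) := by
    filter_upwards [Ioo_mem_nhdsGT_of_mem (⟨le_refl 0, hρpos⟩ : (0:ℝ) ∈ Ico 0 ρ)] with r hr
    have hr0 : 0 < r := hr.1
    have hra_pos : 0 < r^a := Real.rpow_pos_of_pos hr0 a
    have hr13 : r ≤ 1/3 := hr.2.le.trans (min_le_left _ _)
    have hra13 : r^a ≤ 1/3 := by
      have h1 : r ≤ (1/3:ℝ)^(a⁻¹:ℝ) := hr.2.le.trans (min_le_right _ _)
      calc r^a ≤ ((1/3:ℝ)^(a⁻¹:ℝ))^a := Real.rpow_le_rpow hr0.le h1 ha.1.le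
      _ = (1/3:ℝ)^(a⁻¹*a) := by rw [← Real.rpow_mul (by norm_num : (0:ℝ) ≤ 1/3)]
      _ = 1/3 := by rw [inv_mul_cancel₀ (ne_of_gt ha.1), Real.rpow_one]
    obtain ⟨hVfl, _⟩ := key (r^a) hra_pos hra13
    obtain ⟨hVl, hVu⟩ := key r hr0 hr13
    have hVpos : 0 < visualAngle B (r•u) (r•w) :=
      lt_of_lt_of_le (by positivity) hVl
    rw [(hfr r hr0).1, (hfr r hr0).2]
    have step1 : Real.sin θ/10 * r^(a-1) = (r^a * Real.sin θ)/(10*r) := by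
      rw [Real.rpow_sub hr0, Real.rpow_one]
      field_simp
    rw [step1]
    have hnum_pos : 0 < r^a * Real.sin θ := by positivity
    have hVf_pos : 0 < visualAngle B ((r^a : ℝ)•u) ((r^a : ℝ)•w) :=
      lt_of_lt_of_le hnum_pos hVfl
    exact div_le_div₀ hVf_pos.le hVfl hVpos hVu
  -- the comparison function tends to infinity
  have htend0 : Tendsto (fun r : ℝ => Real.sin θ/10 * r^(a-1)) (𝓝[>] (0:ℝ)) atTop := by
    apply Tendsto.const_mul_atTop (by positivity : (0:ℝ) < Real.sin θ/10)
    have h1 : Tendsto (fun r : ℝ => r^(1-a)) (𝓝[>] (0:ℝ)) (𝓝[>] (0:ℝ)) := by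
      apply tendsto_nhdsWithin_of_tendsto_nhds_of_eventually_within
      · have hc : ContinuousAt (fun r : ℝ => r^(1-a)) 0 :=
          Real.continuousAt_rpow_const 0 (1-a) (Or.inr (by linarith [ha.2]))
        have h0 : (0:ℝ)^((1:ℝ)-a) = 0 := Real.zero_rpow (by intro h; linarith [ha.2])
        have := hc.tendsto
        rw [h0] at this
        exact this.mono_left nhdsWithin_le_nhds
      · filter_upwards [self_mem_nhdsWithin] with r hr
        exact mem_Ioi.2 (Real.rpow_pos_of_pos hr _)
    have h2 := h1.inv_tendsto_nhdsGT_zero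
    apply h2.congr'
    filter_upwards [self_mem_nhdsWithin] with r hr
    rw [Pi.inv_apply, ← Real.rpow_neg (le_of_lt hr)]
    norm_num
  have part1 : Tendsto (fun r : ℝ =>
      visualAngle B (f (r • u)) (f (r • w)) / visualAngle B (r • u) (r • w))
      (𝓝[>] (0:ℝ)) atTop := tendsto_atTop_mono' _ hev htend0
  refine ⟨part1, ?_⟩
  rintro ⟨L, hL1, hbil⟩
  have hev2 := part1.eventually_gt_atTop L
  have hev3 : ∀ᶠ r in 𝓝[>] (0:ℝ), r ∈ Ioo (0:ℝ) ρ :=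
    Ioo_mem_nhdsGT_of_mem (⟨le_refl 0, hρpos⟩ : (0:ℝ) ∈ Ico 0 ρ)
  obtain ⟨r, hrL, hrIoo⟩ := (hev2.and hev3).exists
  have hr0 : 0 < r := hrIoo.1
  have hr13 : r ≤ 1/3 := hrIoo.2.le.trans (min_le_left _ _)
  have hr1 : r < 1 := by linarith
  have hVpos : 0 < visualAngle B (r•u) (r•w) :=
    lt_of_lt_of_le (by positivity) (key r hr0 hr13).1
  have hbu : r•u ∈ ball (0 : EuclideanSpace ℝ (Fin n)) 1 := by
    rw [mem_ball_zero_iff, norm_smul, hu, mul_one, Real.norm_eq_abs, abs_of_pos hr0]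
    exact hr1
  have hbw : r•w ∈ ball (0 : EuclideanSpace ℝ (Fin n)) 1 := by
    rw [mem_ball_zero_iff, norm_smul, hw, mul_one, Real.norm_eq_abs, abs_of_pos hr0]
    exact hr1
  have hle := (hbil (r•u) hbu (r•w) hbw).2
  have : visualAngle B (f (r•u)) (f (r•w)) / visualAngle B (r•u) (r•w) ≤ L :=
    (div_le_iff₀ hVpos).2 hle
  linarith
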